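/- For every multiset s of positive integers with sum at most 11, s is uniquely determined among multisets of positive integers by the triple (sum s, prod s, card s). That is, if s and t are multisets of positive integers with equal sums ≤ 11, equal products, and equal cardinalities, then s = t. -/

import Mathlib

/-- Fueled enumeration of all multisets of positive integers with sum `n`
and all elements `≤ m` (listed with the maximum first). -/
def enumP : ℕ → ℕ → ℕ → List (Multiset ℕ)
  | 0, _, _ => []
  | _ + 1, 0, _ => [0]
  | f + 1, n + 1, m =>
      (List.range' 1 (min (n + 1) m)).flatMap fun k =>
        (enumP f (n + 1 - k) k).map (k ::ₘ ·)

lemma enumP_complete : ∀ f n m (s : Multiset ℕ), n < f →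
    (∀ x ∈ s, 0 < x ∧ x ≤ m) → s.sum = n → s ∈ enumP f n m := by
  intro f
  induction f with
  | zero => omega
  | succ f ih =>
    intro n m s hnf hpos hsum
    match n with
    | 0 =>
      have : s = 0 := by
        rw [Multiset.eq_zero_iff_forall_notMem]
        intro x hx
        have h1 := (hpos x hx).1
        have h2 := Multiset.single_le_sum (fun y _ => Nat.zero_le y) x hx
        omega
      simp [this, enumP]
    | n + 1 =>
      have hs0 : s ≠ 0 := by
        intro h; rw [h] at hsum; simp at hsum
      have hne : s.toFinset.Nonempty := by
        simpa [Multiset.toFinset_nonempty] using hs0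
      obtain ⟨a, ha, hmax⟩ : ∃ a ∈ s, ∀ b ∈ s, b ≤ a := by
        refine ⟨s.toFinset.max' hne, Multiset.mem_toFinset.1 (s.toFinset.max'_mem hne), ?_⟩
        intro b hb
        exact s.toFinset.le_max' b (Multiset.mem_toFinset.2 hb)
      have han : a ≤ n + 1 := by
        have := Multiset.single_le_sum (fun y _ => Nat.zero_le y) a ha
        omega
      have ham : a ≤ m := (hpos a ha).2
      have ha1 : 0 < a := (hpos a ha).1
      have hcons : a ::ₘ s.erase a = s := Multiset.cons_erase ha
      have hesum : (s.erase a).sum = n + 1 - a := by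
        have : (a ::ₘ s.erase a).sum = n + 1 := by rw [hcons]; exact hsum
        rw [Multiset.sum_cons] at this
        omega
      have hmem : s.erase a ∈ enumP f (n + 1 - a) a := by
        apply ih
        · omega
        · intro x hx
          have hxs := Multiset.mem_of_mem_erase hx
          exact ⟨(hpos x hxs).1, hmax x hxs⟩
        · exact hesum
      show s ∈ (List.range' 1 (min (n + 1) m)).flatMap fun k =>
        (enumP f (n + 1 - k) k).map (k ::ₘ ·)
      rw [List.mem_flatMap]
      refine ⟨a, ?_, ?_⟩
      · rw [List.mem_range'_1]
        omega
      · rw [List.mem_map]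
        exact ⟨s.erase a, hmem, hcons⟩

set_option maxRecDepth 100000 in
lemma key : ∀ n ∈ List.range 12, ∀ s ∈ enumP 12 n n, ∀ t ∈ enumP 12 n n,
    s.prod = t.prod → Multiset.card s = Multiset.card t → s = t := by decide

theorem sum_le_eleven_unique
    (s t : Multiset ℕ) (hs : ∀ x ∈ s, 0 < x) (ht : ∀ x ∈ t, 0 < x)
    (hle : s.sum ≤ 11) (hsum : s.sum = t.sum)
    (hprod : s.prod = t.prod) (hcard : Multiset.card s = Multiset.card t) :
    s = t := by
  set n := s.sum with hn
  have hsn : s ∈ enumP 12 n n := by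
    apply enumP_complete
    · omega
    · intro x hx
      exact ⟨hs x hx, Multiset.single_le_sum (fun y _ => Nat.zero_le y) x hx⟩
    · rfl
  have htn : t ∈ enumP 12 n n := by
    apply enumP_complete
    · omega
    · intro x hx
      refine ⟨ht x hx, ?_⟩
      have := Multiset.single_le_sum (fun y _ => Nat.zero_le y) x hx
      omega
    · omega
  exact key n (by simp [List.mem_range]; omega) s hsn t htn hprod hcard
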